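/- Let C be a small category whose arrows are (interpreted as) injective functions between sets of points, let F : C → Set be the evident forgetful functor, and suppose A, B : C → Set are functors each of which 'determines' a point of every object in the sense of Lemma 4.3 (each u ∈ A(U) determines a unique point K_u ∈ F(U) as the unique element of the intersection of images of arrows through which u lifts). If α : A → B is a natural transformation, then for every object U and every u ∈ A(U), the point of U determined by α_U(u) ∈ B(U) equals the point determined by u ∈ A(U). -/

import Mathlib

open CategoryTheory

universe w w'

/-- The set of points of `U` (via the points functor `F`) determined by an element
`u ∈ A(U)`: those points lying in the image of `F.map f` for every arrow `f : V ⟶ U`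
through which `u` lifts. -/
def Det {C : Type*} [Category C] (F : C ⥤ Type w) (A : C ⥤ Type w') (U : C) (u : A.obj U) :
    Set (F.obj U) :=
  {x | ∀ (V : C) (f : V ⟶ U) (v : A.obj V), A.map f v = u → x ∈ Set.range (F.map f)}

/-- If `A` and `B` both determine points (each `Det` set is a singleton), arrows act as
injective maps of points, and `α : A ⟶ B` is a natural transformation, then for every
`u ∈ A(U)` the point determined by `α_U(u) ∈ B(U)` equals the point determined by `u`. -/
theorem stmt_8 {C : Type*} [Category C] (F : C ⥤ Type w) (A B : C ⥤ Type w')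
    (hinj : ∀ {V U : C} (f : V ⟶ U), Function.Injective (F.map f))
    (hA : ∀ (U : C) (u : A.obj U), ∃ x : F.obj U, Det F A U u = {x})
    (hB : ∀ (U : C) (u : B.obj U), ∃ x : F.obj U, Det F B U u = {x})
    (α : A ⟶ B) :
    ∀ (U : C) (u : A.obj U) (x y : F.obj U),
      Det F A U u = {x} → Det F B U (α.app U u) = {y} → x = y := by
  intro U u x y hx hy
  have hsub : Det F B U (α.app U u) ⊆ Det F A U u := by
    intro z hz V f v hv
    have : B.map f (α.app V v) = α.app U u := by
      have := FunctorToTypes.naturality (φ := α) (f := f) (x := v)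
      rw [← this, hv]
    exact hz V f (α.app V v) this
  have : y ∈ Det F A U u := hsub (hy ▸ rfl)
  rw [hx] at this
  exact this.symm
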